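/- Let q ≥ 2, n ≥ 1 and let D_1, D_2 ⊆ {1,…,n}. The chromatic numbers of the distance graphs G(Z_q^n, D_1) and G(Z_q^n, D_2) are equal if and only if |D_1| = |D_2|. -/

import Mathlib

/-- The Rosenbloom–Tsfasman weight of a vector in `Z_q^n`:
the largest (1-based) index `i` with `x i ≠ 0`, and `0` for the zero vector. -/
def rtWeight {q n : ℕ} (x : Fin n → ZMod q) : ℕ :=
  (Finset.univ.filter fun i => x i ≠ 0).sup fun i => i.val + 1

/-- The Rosenbloom–Tsfasman distance on `Z_q^n`: `ρ(x,y) = ω(x - y)`. -/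
def rtDist {q n : ℕ} (x y : Fin n → ZMod q) : ℕ := rtWeight (x - y)

/-- The distance graph `G(Z_q^n, D)`: distinct `x, y` are adjacent iff `ρ(x,y) ∈ D`. -/
def rtGraph (q n : ℕ) (D : Finset ℕ) : SimpleGraph (Fin n → ZMod q) :=
  SimpleGraph.fromRel fun x y => rtDist x y ∈ D

lemma rtWeight_attain {q n : ℕ} {x : Fin n → ZMod q} (hx : x ≠ 0) :
    ∃ i : Fin n, x i ≠ 0 ∧ rtWeight x = i.val + 1 := by
  have hne : (Finset.univ.filter fun i => x i ≠ 0).Nonempty := by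
    rw [Finset.filter_nonempty_iff]
    by_contra h
    push_neg at h
    exact hx (funext fun i => by simpa using h i (Finset.mem_univ i))
  obtain ⟨i, hi, hsup⟩ := Finset.exists_mem_eq_sup _ hne (fun i : Fin n => i.val + 1)
  exact ⟨i, (Finset.mem_filter.mp hi).2, hsup⟩

lemma rtWeight_mem {q n : ℕ} {x : Fin n → ZMod q} {D : Finset ℕ}
    (hx : x ≠ 0) (h : ∀ i : Fin n, x i ≠ 0 → i.val + 1 ∈ D) : rtWeight x ∈ D := by
  obtain ⟨i, hi, hw⟩ := rtWeight_attain hx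
  rw [hw]; exact h i hi

lemma rtDist_comm {q n : ℕ} (x y : Fin n → ZMod q) : rtDist x y = rtDist y x := by
  unfold rtDist rtWeight
  congr 1
  apply Finset.filter_congr
  intro i _
  constructor <;> intro h <;> simpa [sub_eq_zero, eq_comm] using h

set_option maxHeartbeats 1000000 in
lemma rtGraph_chromaticNumber (q n : ℕ) (hq : 2 ≤ q) (D : Finset ℕ)
    (hD : D ⊆ Finset.Icc 1 n) :
    (rtGraph q n D).chromaticNumber = ((q ^ D.card : ℕ) : ℕ∞) := by
  haveI : NeZero q := ⟨by omega⟩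
  have hidx : ∀ d ∈ D, d - 1 < n := by
    intro d hd
    have := Finset.mem_Icc.mp (hD hd)
    omega
  have hcard : Fintype.card (↥D → ZMod q) = q ^ D.card := by
    simp [Fintype.card_fun, ZMod.card]
  -- upper bound: coloring
  have col : (rtGraph q n D).Coloring (↥D → ZMod q) := by
    refine SimpleGraph.Coloring.mk
      (fun x d => x ⟨d.val - 1, hidx d.val d.prop⟩) ?_
    intro x y hadj hcol
    rw [rtGraph, SimpleGraph.fromRel_adj] at hadj
    obtain ⟨hne, hmem⟩ := hadj
    have hmem : rtDist x y ∈ D := by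
      rcases hmem with h | h
      · exact h
      · rw [rtDist_comm]; exact h
    have hxy : x - y ≠ 0 := sub_ne_zero.mpr hne
    obtain ⟨i, hi, hw⟩ := rtWeight_attain hxy
    have hwD : i.val + 1 ∈ D := by rw [← hw]; exact hmem
    have := congrFun hcol ⟨i.val + 1, hwD⟩
    simp only at this
    have hfin : (⟨i.val + 1 - 1, hidx _ hwD⟩ : Fin n) = i := by
      ext; simp
    rw [hfin] at this
    exact hi (by simp [sub_eq_zero, this, Pi.sub_apply])
  -- lower bound: embedding of complete graph
  have F : (⊤ : SimpleGraph (↥D → ZMod q)) ↪g rtGraph q n D := by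
    refine ⟨⟨fun c i => if h : i.val + 1 ∈ D then c ⟨i.val + 1, h⟩ else 0, ?_⟩, ?_⟩
    · intro c c' h
      funext d
      have hd := Finset.mem_Icc.mp (hD d.prop)
      set i : Fin n := ⟨d.val - 1, by omega⟩ with hi
      have hiv : i.val + 1 = d.val := by simp [hi]; omega
      have h1 := congrFun h i
      have hmem : i.val + 1 ∈ D := by rw [hiv]; exact d.prop
      have hsub : (⟨i.val + 1, hmem⟩ : ↥D) = d := by ext; exact hiv
      simpa [hmem, hsub] using h1
    · intro c c'
      simp only [SimpleGraph.top_adj]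
      constructor
      · rintro hadj rfl
        rw [rtGraph, SimpleGraph.fromRel_adj] at hadj
        exact hadj.1 rfl
      · intro hne
        have hFne : (fun i : Fin n => if h : i.val + 1 ∈ D then c ⟨i.val + 1, h⟩ else 0)
            ≠ (fun i : Fin n => if h : i.val + 1 ∈ D then c' ⟨i.val + 1, h⟩ else 0) := by
          intro h
          apply hne
          funext d
          have hd := Finset.mem_Icc.mp (hD d.prop)
          have hlt : d.val - 1 < n := by omega
          have hiv : (⟨d.val - 1, hlt⟩ : Fin n).val + 1 = d.val := by simp; omega
          have h1 := congrFun h ⟨d.val - 1, hlt⟩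
          have hmem : (⟨d.val - 1, hlt⟩ : Fin n).val + 1 ∈ D := by rw [hiv]; exact d.prop
          have hsub : (⟨(⟨d.val - 1, hlt⟩ : Fin n).val + 1, hmem⟩ : ↥D) = d := by ext; exact hiv
          simpa [hmem, hsub] using h1
        rw [rtGraph, SimpleGraph.fromRel_adj]
        refine ⟨hFne, Or.inl ?_⟩
        apply rtWeight_mem (sub_ne_zero.mpr hFne)
        intro i hi
        by_contra hmem
        simp [Pi.sub_apply, hmem] at hi
  have hle : (rtGraph q n D).chromaticNumber ≤ ((q ^ D.card : ℕ) : ℕ∞) := by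
    have := col.colorable.chromaticNumber_le
    rwa [hcard] at this
  have hge : ((q ^ D.card : ℕ) : ℕ∞) ≤ (rtGraph q n D).chromaticNumber := by
    have := SimpleGraph.chromaticNumber_mono_of_hom F.toHom
    rwa [SimpleGraph.chromaticNumber_top, hcard] at this
  exact le_antisymm hle hge

/-- The chromatic numbers of `G(Z_q^n, D₁)` and `G(Z_q^n, D₂)` agree iff `|D₁| = |D₂|`. -/
theorem rtGraph_chromaticNumber_eq_iff (q n : ℕ) (hq : 2 ≤ q) (hn : 1 ≤ n)
    (D₁ D₂ : Finset ℕ) (hD₁ : D₁ ⊆ Finset.Icc 1 n) (hD₂ : D₂ ⊆ Finset.Icc 1 n) :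
    (rtGraph q n D₁).chromaticNumber = (rtGraph q n D₂).chromaticNumber ↔
      D₁.card = D₂.card := by
  rw [rtGraph_chromaticNumber q n hq D₁ hD₁, rtGraph_chromaticNumber q n hq D₂ hD₂,
    Nat.cast_inj]
  exact ⟨fun h => Nat.pow_right_injective hq h, fun h => by rw [h]⟩
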